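/- The value vector v_π is a fixed point of the λ-Bellman operator: for every λ ∈ (0,1), v_π = r_π^{(λ)} + γ̃ · P_π^{(λ)} v_π, where γ̃ = γ(1-λ)/(1-γλ), P_π^{(λ)} = (1-γλ) Σ_{t=0}^∞ (γλ)^t P_π^{t+1}, and r_π^{(λ)} = Σ_{t=0}^∞ (γλ)^t P_π^t r_π (the λ-return version of the Bellman equation). -/

import Mathlib

/-- λ-return version of the Bellman equation: the value vector `v_π` is a fixed
point of the λ-Bellman operator, i.e. `v_π = r_π^{(λ)} + γ̃ P_π^{(λ)} v_π`. -/
theorem lambda_return_bellman_equation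
    {S A : Type*} [Fintype S] [Nonempty S] [DecidableEq S] [Fintype A] [Nonempty A]
    (P : S → A → S → ℝ)
    (hP0 : ∀ s a s', 0 ≤ P s a s')
    (hP1 : ∀ s a, ∑ s', P s a s' = 1)
    (r : S → A → S → ℝ)
    (γ : ℝ) (hγ0 : 0 < γ) (hγ1 : γ < 1)
    (π : S → A → ℝ)
    (hπ0 : ∀ s a, 0 ≤ π s a)
    (hπ1 : ∀ s, ∑ a, π s a = 1)
    (Pπ : Matrix S S ℝ)
    (hPπ : ∀ s s', Pπ s s' = ∑ a, π s a * P s a s')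
    (rπ : S → ℝ)
    (hrπ : ∀ s, rπ s = ∑ a, ∑ s', π s a * (P s a s' * r s a s'))
    (vπ : S → ℝ)
    (hvπ : vπ = ∑' t : ℕ, γ ^ t • (Pπ ^ t).mulVec rπ)
    (lam : ℝ) (hlam0 : 0 < lam) (hlam1 : lam < 1)
    (tγ : ℝ) (htγ : tγ = γ * (1 - lam) / (1 - γ * lam))
    (Plam : Matrix S S ℝ)
    (hPlam : Plam = (1 - γ * lam) • ∑' t : ℕ, (γ * lam) ^ t • Pπ ^ (t + 1))
    (rlam : S → ℝ)
    (hrlam : rlam = ∑' t : ℕ, (γ * lam) ^ t • (Pπ ^ t).mulVec rπ) :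
    vπ = rlam + tγ • Plam.mulVec vπ := by
  set c : ℝ := γ * lam with hc
  have hc0 : 0 ≤ c := le_of_lt (mul_pos hγ0 hlam0)
  have hc1 : c < 1 := by nlinarith
  -- stochasticity of powers of Pπ
  have hPπ0 : ∀ s s', 0 ≤ Pπ s s' := by
    intro s s'; rw [hPπ]
    exact Finset.sum_nonneg fun a _ => mul_nonneg (hπ0 s a) (hP0 s a s')
  have hPπ1 : ∀ s, ∑ s', Pπ s s' = 1 := by
    intro s
    simp only [hPπ]
    rw [Finset.sum_comm]
    have : ∀ a ∈ Finset.univ, ∑ s', π s a * P s a s' = π s a := by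
      intro a _
      rw [← Finset.mul_sum, hP1 s a, mul_one]
    rw [Finset.sum_congr rfl this, hπ1]
  have hpow : ∀ t : ℕ, (∀ s s', 0 ≤ (Pπ ^ t) s s') ∧ (∀ s, ∑ s', (Pπ ^ t) s s' = 1) := by
    intro t
    induction t with
    | zero =>
      constructor
      · intro s s'
        by_cases h : s = s' <;> simp [Matrix.one_apply, h]
      · intro s; simp [Matrix.one_apply]
    | succ n ih =>
      rw [pow_succ]
      constructor
      · intro s s'
        rw [Matrix.mul_apply]
        exact Finset.sum_nonneg fun j _ => mul_nonneg (ih.1 s j) (hPπ0 j s')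
      · intro s
        simp only [Matrix.mul_apply]
        rw [Finset.sum_comm]
        calc ∑ j, ∑ s', (Pπ ^ n) s j * Pπ j s'
            = ∑ j, (Pπ ^ n) s j * ∑ s', Pπ j s' := by
              simp [Finset.mul_sum]
          _ = 1 := by
              simp only [hPπ1, mul_one]
              exact ih.2 s
  -- entries of powers are ≤ 1
  have hent : ∀ (t : ℕ) (s s' : S), (Pπ ^ t) s s' ≤ 1 := by
    intro t s s'
    calc (Pπ ^ t) s s' ≤ ∑ j, (Pπ ^ t) s j :=
          Finset.single_le_sum (fun j _ => (hpow t).1 s j) (Finset.mem_univ s')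
      _ = 1 := (hpow t).2 s
  -- componentwise bound for mulVec by powers
  have hbound : ∀ (t : ℕ) (w : S → ℝ) (s : S), |((Pπ ^ t).mulVec w) s| ≤ ‖w‖ := by
    intro t w s
    have : ((Pπ ^ t).mulVec w) s = ∑ s', (Pπ ^ t) s s' * w s' := rfl
    rw [this]
    calc |∑ s', (Pπ ^ t) s s' * w s'| ≤ ∑ s', |(Pπ ^ t) s s' * w s'| :=
          Finset.abs_sum_le_sum_abs _ _
      _ ≤ ∑ s', (Pπ ^ t) s s' * ‖w‖ := by
          refine Finset.sum_le_sum fun s' _ => ?_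
          rw [abs_mul, abs_of_nonneg ((hpow t).1 s s')]
          exact mul_le_mul_of_nonneg_left (norm_le_pi_norm w s') ((hpow t).1 s s')
      _ = ‖w‖ := by rw [← Finset.sum_mul, (hpow t).2 s, one_mul]
  have hnorm : ∀ (t : ℕ) (w : S → ℝ), ‖(Pπ ^ t).mulVec w‖ ≤ ‖w‖ := by
    intro t w
    exact (pi_norm_le_iff_of_nonneg (norm_nonneg w)).2 fun s => hbound t w s
  -- summability of vector series
  have hsummv : ∀ (d : ℝ), 0 ≤ d → d < 1 → ∀ (w : S → ℝ),
      Summable (fun t : ℕ => d ^ t • (Pπ ^ t).mulVec w) := by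
    intro d hd0 hd1 w
    refine Summable.of_norm_bounded
      ((summable_geometric_of_lt_one hd0 hd1).mul_right ‖w‖) ?_
    intro t
    rw [norm_smul, Real.norm_eq_abs, abs_of_nonneg (pow_nonneg hd0 t)]
    exact mul_le_mul_of_nonneg_left (hnorm t w) (pow_nonneg hd0 t)
  -- shifted version
  have hsummv' : ∀ (d : ℝ), 0 ≤ d → d < 1 → ∀ (w : S → ℝ),
      Summable (fun t : ℕ => d ^ t • (Pπ ^ (t + 1)).mulVec w) := by
    intro d hd0 hd1 w
    refine Summable.of_norm_bounded
      ((summable_geometric_of_lt_one hd0 hd1).mul_right ‖w‖) ?_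
    intro t
    rw [norm_smul, Real.norm_eq_abs, abs_of_nonneg (pow_nonneg hd0 t)]
    exact mul_le_mul_of_nonneg_left (hnorm (t + 1) w) (pow_nonneg hd0 t)
  -- continuous linear map : mulVec by fixed matrix
  have hmapP : ∀ (f : ℕ → S → ℝ), Summable f →
      Pπ.mulVec (∑' t, f t) = ∑' t, Pπ.mulVec (f t) := by
    intro f hf
    let L : (S → ℝ) →L[ℝ] (S → ℝ) :=
      LinearMap.toContinuousLinearMap
        ⟨⟨fun x => Pπ.mulVec x, fun x y => Matrix.mulVec_add Pπ x y⟩,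
          fun a x => (Matrix.mulVec_smul Pπ a x)⟩
    exact L.map_tsum hf
  -- Bellman equation
  have hγ0' : (0:ℝ) ≤ γ := le_of_lt hγ0
  have hBell : vπ = rπ + γ • Pπ.mulVec vπ := by
    have hs := hsummv γ hγ0' hγ1 rπ
    have h1 : γ • Pπ.mulVec vπ = ∑' t : ℕ, γ ^ (t + 1) • (Pπ ^ (t + 1)).mulVec rπ := by
      rw [hvπ, hmapP _ hs, ← tsum_const_smul'' γ]
      apply tsum_congr
      intro t
      rw [Matrix.mulVec_smul, Matrix.mulVec_mulVec, ← pow_succ', smul_smul, ← pow_succ']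
    rw [h1, hvπ, Summable.tsum_eq_zero_add hs]
    congr 1
    simp [Matrix.one_mulVec]
  -- summability of the matrix series
  have hsummM : Summable (fun t : ℕ => c ^ t • Pπ ^ (t + 1)) := by
    refine Pi.summable.2 fun s => Pi.summable.2 fun s' => ?_
    refine Summable.of_norm_bounded
      (summable_geometric_of_lt_one hc0 hc1) ?_
    intro t
    have h1 : ‖(c ^ t • Pπ ^ (t + 1)) s s'‖ = c ^ t * |(Pπ ^ (t + 1)) s s'| := by
      simp [Matrix.smul_apply, smul_eq_mul, abs_mul, abs_pow, abs_of_nonneg hc0,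
        abs_of_nonneg (pow_nonneg hc0 t)]
    rw [h1]
    have := hent (t + 1) s s'
    have h0 := (hpow (t + 1)).1 s s'
    calc c ^ t * |(Pπ ^ (t + 1)) s s'| ≤ c ^ t * 1 := by
          apply mul_le_mul_of_nonneg_left _ (pow_nonneg hc0 t)
          rw [abs_of_nonneg h0]; exact this
      _ = c ^ t := mul_one _
  -- mulVec of the matrix tsum
  have hMtsum : (∑' t : ℕ, c ^ t • Pπ ^ (t + 1)).mulVec vπ
      = ∑' t : ℕ, c ^ t • (Pπ ^ (t + 1)).mulVec vπ := by
    let L : Matrix S S ℝ →L[ℝ] (S → ℝ) :=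
      LinearMap.toContinuousLinearMap
        ⟨⟨fun M => M.mulVec vπ, fun M N => Matrix.add_mulVec M N vπ⟩,
          fun a M => Matrix.smul_mulVec a M vπ⟩
    have := L.map_tsum hsummM
    have heq : ∀ t : ℕ, L (c ^ t • Pπ ^ (t + 1)) = c ^ t • (Pπ ^ (t + 1)).mulVec vπ := by
      intro t
      show (c ^ t • Pπ ^ (t + 1)).mulVec vπ = _
      rw [Matrix.smul_mulVec]
    rw [show (∑' t : ℕ, c ^ t • Pπ ^ (t+1)).mulVec vπ = L (∑' t : ℕ, c ^ t • Pπ ^ (t+1)) from rfl,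
      this]
    exact tsum_congr heq
  set w : S → ℝ := ∑' t : ℕ, c ^ t • (Pπ ^ (t + 1)).mulVec vπ with hw
  -- Step A : tγ • Plam.mulVec vπ = (γ * (1 - lam)) • w
  have hcne : (1 : ℝ) - c ≠ 0 := by linarith
  have hstepA : tγ • Plam.mulVec vπ = (γ * (1 - lam)) • w := by
    rw [hPlam, Matrix.smul_mulVec, hMtsum, smul_smul, htγ]
    congr 1
    field_simp
  -- Step B : rlam = (∑' t, c^t • (Pπ^t).mulVec vπ) - γ • w
  have hsum1 := hsummv c hc0 hc1 vπ
  have hsum2 := hsummv' c hc0 hc1 vπ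
  have hstepB : rlam = (∑' t : ℕ, c ^ t • (Pπ ^ t).mulVec vπ) - γ • w := by
    rw [hrlam, hw, ← tsum_const_smul'' γ, ← Summable.tsum_sub hsum1 (hsum2.const_smul γ)]
    apply tsum_congr
    intro t
    have hrw : rπ = vπ - γ • Pπ.mulVec vπ := (eq_sub_iff_add_eq).2 hBell.symm
    rw [hrw, Matrix.mulVec_sub, Matrix.mulVec_smul, smul_sub, smul_comm (c ^ t) γ,
      Matrix.mulVec_mulVec, ← pow_succ]
  -- conclude
  rw [hstepA, hstepB]
  have hA : (∑' t : ℕ, c ^ t • (Pπ ^ t).mulVec vπ) = vπ + c • w := by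
    rw [Summable.tsum_eq_zero_add hsum1]
    congr 1
    · simp [Matrix.one_mulVec]
    · rw [hw, ← tsum_const_smul'' c]
      apply tsum_congr
      intro t
      rw [smul_smul, ← pow_succ']
  rw [hA]
  have : γ * (1 - lam) = γ - c := by ring
  rw [this, sub_smul]
  module
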